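/- Let f_θ be a model on {-1,1}^n satisfying: f_θ(x) = ∏_{i : θ_i ≥ 3/n} x_i whenever θ ∈ ([−2/n, 2/n] ∪ [3/n, 5/n])^n with some θ_i ≥ 3/n, and f_0 ≡ 0 with ∇_θ f_0(x) = 2x. Let D be the biased sparse parities distribution D_I with parameters (n, k, α), τ = α/2^k and η = 2^k/(αn). Then for any g ∈ ℝ^n with ‖g − ∇_θ L_D(f_0)‖ ≤ τ, the point θ⁽¹⁾ = −η g satisfies θ⁽¹⁾_j ∈ [3/n, 5/n] for j ∈ I and θ⁽¹⁾_j ∈ [0, 2/n] for j ∉ I, and hence f_{θ⁽¹⁾}(x) = χ_I(x) for all x, so L_D(f_{θ⁽¹⁾}) = 0. -/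

import Mathlib

open Finset

noncomputable def sgn (b : Bool) : ℝ := if b then 1 else -1

noncomputable def chi {n : ℕ} (I : Finset (Fin n)) (x : Fin n → Bool) : ℝ :=
  ∏ i ∈ I, sgn (x i)

noncomputable def unif (n : ℕ) (_x : Fin n → Bool) : ℝ := 1 / 2 ^ n

noncomputable def D1 (n : ℕ) (x : Fin n → Bool) : ℝ :=
  ∏ i : Fin n, (if x i then (3:ℝ)/4 else 1/4)

noncomputable def DX (n : ℕ) (α : ℝ) (x : Fin n → Bool) : ℝ :=
  (1 - α) * unif n x + α * D1 n x

lemma sum_prod_sgn {n : ℕ} (S : Finset (Fin n)) (p : Bool → ℝ) :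
    ∑ x : Fin n → Bool, (∏ i, p (x i)) * ∏ i ∈ S, sgn (x i)
      = ∏ i : Fin n, (if i ∈ S then p true - p false else p true + p false) := by
  have h : ∀ x : Fin n → Bool, (∏ i, p (x i)) * ∏ i ∈ S, sgn (x i)
      = ∏ i : Fin n, (p (x i) * if i ∈ S then sgn (x i) else 1) := by
    intro x
    rw [Finset.prod_mul_distrib]
    congr 1
    rw [Fintype.prod_ite_mem]
  simp_rw [h]
  rw [← Fintype.prod_sum (fun i b => p b * if i ∈ S then sgn b else 1)]
  apply Finset.prod_congr rfl
  intro i _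
  by_cases hi : i ∈ S <;> simp [hi, sgn] <;> ring

/-- Claim 3.1: one step of `τ`-approximate gradient descent from `θ₀ = 0` (where the
population gradient of the square loss is `∇_θ L(f_0) j = E[(0 - y)·2 x_j]`) lands the
coordinates in `I` in `[3/n, 5/n]` and the rest in `[0, 2/n]`, so the model outputs the
parity `χ_I` exactly and achieves zero population square loss. -/
theorem stmt14 {n k : ℕ} (hn : 2 ≤ n) (I : Finset (Fin n)) (hI : I.card = k)
    (hk : 2 ≤ k) (hkn : k ≤ n) (α : ℝ) (hα : 0 < α) (hα1 : α < 1)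
    (f : (Fin n → ℝ) → (Fin n → Bool) → ℝ)
    (hf : ∀ θ : Fin n → ℝ,
      (∀ i, θ i ∈ Set.Icc (-(2 / (n : ℝ))) (2 / (n : ℝ)) ∪
            Set.Icc (3 / (n : ℝ)) (5 / (n : ℝ))) →
      (∃ i, 3 / (n : ℝ) ≤ θ i) →
      ∀ x, f θ x = ∏ i ∈ Finset.univ.filter (fun i => 3 / (n : ℝ) ≤ θ i), sgn (x i))
    (τ η : ℝ) (hτ : τ = α / 2 ^ k) (hη : η = 2 ^ k / (α * n))
    (gradL : EuclideanSpace ℝ (Fin n))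
    (hgradL : ∀ j, gradL j =
      ∑ x : Fin n → Bool, DX n α x * ((0 - chi I x) * (2 * sgn (x j))))
    (g : EuclideanSpace ℝ (Fin n)) (hg : ‖g - gradL‖ ≤ τ) :
    (∀ j ∈ I, -η * g j ∈ Set.Icc (3 / (n : ℝ)) (5 / (n : ℝ))) ∧
    (∀ j ∉ I, -η * g j ∈ Set.Icc (0 : ℝ) (2 / (n : ℝ))) ∧
    (∀ x, f (fun j => -η * g j) x = chi I x) ∧
    ∑ x : Fin n → Bool, DX n α x * (f (fun j => -η * g j) x - chi I x) ^ 2 / 2 = 0 := by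
  obtain ⟨m, rfl⟩ : ∃ m, k = m + 2 := ⟨k - 2, by omega⟩
  have hn0 : (0:ℝ) < n := by positivity
  have h2k : (0:ℝ) < 2 ^ (m + 2) := by positivity
  have hsq : ∀ b, sgn b * sgn b = 1 := by intro b; cases b <;> simp [sgn]
  -- compute the gradient
  have key : ∀ j, gradL j = if j ∈ I then -4 * (α / 2 ^ (m + 2)) else -(α / 2 ^ (m + 2)) := by
    intro j
    rw [hgradL j]
    set S : Finset (Fin n) := if j ∈ I then I.erase j else insert j I with hS
    have hSne : S.Nonempty := by
      rcases eq_or_ne (j ∈ I : Prop) True with h | h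
      all_goals {
        by_cases hj : j ∈ I
        · simp only [hS, if_pos hj]
          rw [← Finset.card_pos, Finset.card_erase_of_mem hj, hI]; omega
        · simp only [hS, if_neg hj]
          exact Finset.insert_nonempty _ _ }
    have hScard : S.card = if j ∈ I then m + 1 else m + 3 := by
      by_cases hj : j ∈ I
      · simp only [hS, if_pos hj, Finset.card_erase_of_mem hj, hI]
        omega
      · simp only [hS, if_neg hj, Finset.card_insert_of_notMem hj, hI]
    have hchi : ∀ x : Fin n → Bool, chi I x * sgn (x j) = chi S x := by
      intro x
      by_cases hj : j ∈ I
      · simp only [hS, if_pos hj, chi]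
        rw [← Finset.mul_prod_erase I _ hj]
        rw [mul_comm (sgn (x j)) _, mul_assoc, hsq, mul_one]
      · simp only [hS, if_neg hj, chi]
        rw [Finset.prod_insert hj, mul_comm]
    have hx : ∀ x : Fin n → Bool, DX n α x * ((0 - chi I x) * (2 * sgn (x j)))
        = (-2*(1-α)) * ((∏ _i : Fin n, ((1:ℝ)/2)) * ∏ i ∈ S, sgn (x i))
          + (-2*α) * ((∏ i, (if x i then (3:ℝ)/4 else 1/4)) * ∏ i ∈ S, sgn (x i)) := by
      intro x
      have h := hchi x
      have hu : unif n x = ∏ _i : Fin n, ((1:ℝ)/2) := by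
        rw [Finset.prod_const, Finset.card_univ, Fintype.card_fin, unif, one_div, one_div,
          inv_pow]
      have he : (0 - chi I x) * (2 * sgn (x j)) = -2 * chi S x := by rw [← h]; ring
      rw [he, DX, hu, D1]
      unfold chi
      ring
    obtain ⟨i0, hi0⟩ := hSne
    have hz0 : ∑ x : Fin n → Bool, (∏ _i : Fin n, ((1:ℝ)/2)) * ∏ i ∈ S, sgn (x i)
        = 0 := by
      have h1 := sum_prod_sgn S (fun _ => (1:ℝ)/2)
      rw [h1]
      exact Finset.prod_eq_zero (Finset.mem_univ i0) (by simp [hi0])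
    have hp0 : ∑ x : Fin n → Bool,
        (∏ i, (if x i then (3:ℝ)/4 else 1/4)) * ∏ i ∈ S, sgn (x i)
        = (1/2 : ℝ) ^ S.card := by
      have h2 := sum_prod_sgn S (fun b => if b then (3:ℝ)/4 else 1/4)
      simp only at h2
      rw [h2]
      norm_num
      rw [one_div, inv_pow]
    calc ∑ x : Fin n → Bool, DX n α x * ((0 - chi I x) * (2 * sgn (x j)))
        = ∑ x : Fin n → Bool,
            ((-2*(1-α)) * ((∏ _i : Fin n, ((1:ℝ)/2)) * ∏ i ∈ S, sgn (x i))
            + (-2*α) * ((∏ i, (if x i then (3:ℝ)/4 else 1/4)) * ∏ i ∈ S, sgn (x i))) :=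
          Finset.sum_congr rfl (fun x _ => hx x)
      _ = (-2*(1-α)) * (∑ x : Fin n → Bool,
              (∏ _i : Fin n, ((1:ℝ)/2)) * ∏ i ∈ S, sgn (x i))
          + (-2*α) * (∑ x : Fin n → Bool,
              (∏ i, (if x i then (3:ℝ)/4 else 1/4)) * ∏ i ∈ S, sgn (x i)) := by
          rw [Finset.sum_add_distrib, Finset.mul_sum, Finset.mul_sum]
      _ = if j ∈ I then -4 * (α / 2 ^ (m + 2)) else -(α / 2 ^ (m + 2)) := by
          rw [hz0, hp0, hScard, one_div, inv_pow]
          by_cases hj : j ∈ I <;> simp only [hj, if_true, if_false] <;>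
            field_simp <;> ring
  -- per-coordinate bound
  have hg' : ∀ j, |g j - gradL j| ≤ α / 2 ^ (m + 2) := by
    intro j
    have h1 : |(g - gradL) j| ≤ ‖g - gradL‖ := by
      rw [EuclideanSpace.norm_eq]
      have e : |(g - gradL) j| = Real.sqrt (‖(g - gradL) j‖ ^ 2) := by
        rw [Real.sqrt_sq_eq_abs, Real.norm_eq_abs, abs_abs]
      rw [e]
      apply Real.sqrt_le_sqrt
      exact Finset.single_le_sum (f := fun i => ‖(g - gradL) i‖ ^ 2)
        (fun i _ => by positivity) (Finset.mem_univ j)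
    rw [PiLp.sub_apply] at h1
    calc |g j - gradL j| ≤ ‖g - gradL‖ := h1
      _ ≤ τ := hg
      _ = α / 2 ^ (m + 2) := hτ
  have hηpos : 0 < η := by rw [hη]; positivity
  -- interval bounds
  have hIpart : ∀ j ∈ I, -η * g j ∈ Set.Icc (3 / (n : ℝ)) (5 / (n : ℝ)) := by
    intro j hj
    have hb := abs_le.mp (hg' j)
    rw [key j, if_pos hj] at hb
    obtain ⟨hb1, hb2⟩ := hb
    have hlo : 3 * (α / 2 ^ (m + 2)) ≤ -g j := by linarith
    have hhi : -g j ≤ 5 * (α / 2 ^ (m + 2)) := by linarith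
    have e3 : η * (3 * (α / 2 ^ (m + 2))) = 3 / n := by
      rw [hη]; field_simp
    have e5 : η * (5 * (α / 2 ^ (m + 2))) = 5 / n := by
      rw [hη]; field_simp
    constructor
    · rw [← e3]; nlinarith [mul_le_mul_of_nonneg_left hlo hηpos.le]
    · rw [← e5]; nlinarith [mul_le_mul_of_nonneg_left hhi hηpos.le]
  have hNpart : ∀ j ∉ I, -η * g j ∈ Set.Icc (0:ℝ) (2 / (n : ℝ)) := by
    intro j hj
    have hb := abs_le.mp (hg' j)
    rw [key j, if_neg hj] at hb
    obtain ⟨hb1, hb2⟩ := hb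
    have hlo : 0 ≤ -g j := by linarith
    have hhi : -g j ≤ 2 * (α / 2 ^ (m + 2)) := by linarith
    have e2 : η * (2 * (α / 2 ^ (m + 2))) = 2 / n := by
      rw [hη]; field_simp
    constructor
    · nlinarith [mul_le_mul_of_nonneg_left hlo hηpos.le]
    · rw [← e2]; nlinarith [mul_le_mul_of_nonneg_left hhi hηpos.le]
  refine ⟨hIpart, hNpart, ?_⟩
  -- the model computes the parity
  have h23 : (2:ℝ)/n < 3/n := by
    rw [div_lt_div_iff₀ hn0 hn0]
    nlinarith
  have hunion : ∀ i, (-η * g i) ∈ Set.Icc (-(2 / (n : ℝ))) (2 / (n : ℝ)) ∪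
      Set.Icc (3 / (n : ℝ)) (5 / (n : ℝ)) := by
    intro i
    by_cases hi : i ∈ I
    · exact Or.inr (hIpart i hi)
    · obtain ⟨hl, hr⟩ := hNpart i hi
      exact Or.inl ⟨by linarith [div_nonneg (by norm_num : (0:ℝ) ≤ 2) hn0.le], hr⟩
  have hex : ∃ i, 3 / (n : ℝ) ≤ -η * g i := by
    obtain ⟨i0, hi0⟩ := Finset.card_pos.mp (by rw [hI]; omega : 0 < I.card)
    exact ⟨i0, (hIpart i0 hi0).1⟩
  have hfθ := hf (fun j => -η * g j) hunion hex
  have hfilter : Finset.univ.filter (fun i => 3 / (n : ℝ) ≤ -η * g i) = I := by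
    ext i
    simp only [Finset.mem_filter, Finset.mem_univ, true_and]
    constructor
    · intro h3
      by_contra hi
      have := (hNpart i hi).2
      linarith
    · intro hi
      exact (hIpart i hi).1
  have hfeq : ∀ x, f (fun j => -η * g j) x = chi I x := by
    intro x
    rw [hfθ x, hfilter, chi]
  refine ⟨hfeq, ?_⟩
  apply Finset.sum_eq_zero
  intro x _
  rw [hfeq x]
  ring
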